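/- (Volume bound for the intersection of two transverse tubes, as in (4.22).) There is an absolute constant C such that if T₁, T₂ ⊂ ℝ³ are solid (possibly infinite) circular cylinders of radius r > 0 whose axes are lines with direction vectors making an angle θ ∈ (0, π/2], then the Lebesgue measure of T₁ ∩ T₂ is at most C r³ / sin θ. -/

import Mathlib

open MeasureTheory Real
open scoped ENNReal RealInnerProductSpace

noncomputable section

abbrev E3 := EuclideanSpace ℝ (Fin 3)

/-- The (infinite) solid circular cylinder of radius `r` about the line through `p`
with unit direction `u`: all points at distance at most `r` from that line. -/
def solidCylinder (p u : E3) (r : ℝ) : Set E3 :=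
  {x | ‖(x - p) - (inner ℝ (x - p) u : ℝ) • u‖ ≤ r}

/-- **Volume bound for the intersection of two transverse tubes** (as in (4.22)):
there is an absolute constant `C` such that if `T₁, T₂` are solid circular cylinders of
radius `r` whose axes make an angle `θ ∈ (0, π/2]` (so that `sin θ` is the norm of the
component of one unit direction orthogonal to the other), then
`|T₁ ∩ T₂| ≤ C r³ / sin θ`. -/
theorem transverse_cylinder_intersection_volume :
    ∃ C : ℝ, 0 < C ∧
      ∀ r : ℝ, 0 < r → ∀ p₁ p₂ u₁ u₂ : E3, ‖u₁‖ = 1 → ‖u₂‖ = 1 →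
      ∀ θ : ℝ, θ ∈ Set.Ioc 0 (π / 2) →
        Real.sin θ = ‖u₁ - (inner ℝ u₁ u₂ : ℝ) • u₂‖ →
        volume (solidCylinder p₁ u₁ r ∩ solidCylinder p₂ u₂ r)
          ≤ ENNReal.ofReal (C * r ^ 3 / Real.sin θ) := by
  refine ⟨16, by norm_num, ?_⟩
  intro r hr p₁ p₂ u₁ u₂ hu₁ hu₂ θ hθ hsin
  have hspos : 0 < Real.sin θ :=
    Real.sin_pos_of_pos_of_lt_pi hθ.1 (lt_of_le_of_lt hθ.2 (by linarith [Real.pi_pos]))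
  set s : ℝ := Real.sin θ with hs
  set v : E3 := u₁ - (inner ℝ u₁ u₂ : ℝ) • u₂ with hv
  have hnv : ‖v‖ = s := hsin.symm
  have hu₂u₂ : (inner ℝ u₂ u₂ : ℝ) = 1 := by
    rw [real_inner_self_eq_norm_sq, hu₂]; norm_num
  have hvu₂ : (inner ℝ v u₂ : ℝ) = 0 := by
    rw [hv, inner_sub_left, real_inner_smul_left, hu₂u₂]; ring
  have hu₂v : (inner ℝ u₂ v : ℝ) = 0 := by rw [real_inner_comm]; exact hvu₂
  have hu₁v : (inner ℝ u₁ v : ℝ) = s ^ 2 := by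
    have h1 : u₁ = v + (inner ℝ u₁ u₂ : ℝ) • u₂ := by simp [hv]
    calc (inner ℝ u₁ v : ℝ) = inner ℝ (v + (inner ℝ u₁ u₂ : ℝ) • u₂) v := by rw [← h1]
      _ = (inner ℝ v v : ℝ) + (inner ℝ u₁ u₂ : ℝ) * (inner ℝ u₂ v : ℝ) := by
          rw [inner_add_left, real_inner_smul_left]
      _ = s ^ 2 := by rw [hu₂v, real_inner_self_eq_norm_sq, hnv]; ring
  -- orthonormal basis extending u₁
  have hcard : Module.finrank ℝ E3 = Fintype.card (Fin 3) := by
    simp [finrank_euclideanSpace_fin]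
  have horth : Orthonormal ℝ (Set.restrict ({0} : Set (Fin 3)) (fun _ => u₁)) := by
    constructor
    · intro i; exact hu₁
    · intro i j hij
      exfalso
      apply hij
      obtain ⟨i, hi⟩ := i; obtain ⟨j, hj⟩ := j
      simp only [Set.mem_singleton_iff] at hi hj
      subst hi; subst hj; rfl
  obtain ⟨b, hb⟩ := horth.exists_orthonormalBasis_extension_of_card_eq hcard
  have hb0 : b 0 = u₁ := by simpa using hb 0 (by simp)
  -- the bounding box
  set c : ℝ := -(inner ℝ (p₁ - p₂) v : ℝ) / s ^ 2 with hc
  set L : ℝ := 2 * r / s with hL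
  set I : Fin 3 → Set ℝ := fun i => if i = 0 then Set.Icc (c - L) (c + L) else Set.Icc (-r) r
    with hI
  set box : Set (EuclideanSpace ℝ (Fin 3)) := WithLp.ofLp ⁻¹' Set.pi Set.univ I with hbox
  have hLpos : 0 < L := by positivity
  -- inclusion
  have hincl : solidCylinder p₁ u₁ r ∩ solidCylinder p₂ u₂ r ⊆
      (fun x => b.repr (x - p₁)) ⁻¹' box := by
    rintro x ⟨h1, h2⟩
    simp only [solidCylinder, Set.mem_setOf_eq] at h1 h2
    set t : ℝ := (inner ℝ (x - p₁) u₁ : ℝ) with ht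
    set w : E3 := (x - p₁) - t • u₁ with hw
    have hwle : ‖w‖ ≤ r := h1
    have hwv : |(inner ℝ w v : ℝ)| ≤ r * s := by
      calc |(inner ℝ w v : ℝ)| ≤ ‖w‖ * ‖v‖ := abs_real_inner_le_norm w v
        _ ≤ r * s := by rw [hnv]; exact mul_le_mul_of_nonneg_right hwle hspos.le
    have hx2v : |(inner ℝ (x - p₂) v : ℝ)| ≤ r * s := by
      have heq : (inner ℝ ((x - p₂) - (inner ℝ (x - p₂) u₂ : ℝ) • u₂) v : ℝ) =
          inner ℝ (x - p₂) v := by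
        have h' := inner_sub_left (𝕜 := ℝ) (x - p₂) ((inner ℝ (x - p₂) u₂ : ℝ) • u₂) v
        rw [h', real_inner_smul_left, hu₂v]; ring
      rw [← heq]
      calc |(inner ℝ ((x - p₂) - (inner ℝ (x - p₂) u₂ : ℝ) • u₂) v : ℝ)|
          ≤ ‖(x - p₂) - (inner ℝ (x - p₂) u₂ : ℝ) • u₂‖ * ‖v‖ := abs_real_inner_le_norm _ _
        _ ≤ r * s := by rw [hnv]; exact mul_le_mul_of_nonneg_right h2 hspos.le
    have hdecomp : x - p₂ = (p₁ - p₂) + (t • u₁ + w) := by rw [hw]; abel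
    have hx2v' : (inner ℝ (x - p₂) v : ℝ) =
        (inner ℝ (p₁ - p₂) v : ℝ) + t * s ^ 2 + (inner ℝ w v : ℝ) := by
      rw [hdecomp, inner_add_left, inner_add_left, real_inner_smul_left, hu₁v]; ring
    have htbound : |t - c| ≤ L := by
      have hkey : |t * s ^ 2 + (inner ℝ (p₁ - p₂) v : ℝ)| ≤ 2 * (r * s) := by
        have : t * s ^ 2 + (inner ℝ (p₁ - p₂) v : ℝ) =
            (inner ℝ (x - p₂) v : ℝ) - (inner ℝ w v : ℝ) := by rw [hx2v']; ring
        rw [this]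
        calc |(inner ℝ (x - p₂) v : ℝ) - (inner ℝ w v : ℝ)|
            ≤ |(inner ℝ (x - p₂) v : ℝ)| + |(inner ℝ w v : ℝ)| := abs_sub _ _
          _ ≤ 2 * (r * s) := by linarith
      have habs : |t - c| * s ^ 2 ≤ 2 * (r * s) := by
        have h1 : (t - c) * s ^ 2 = t * s ^ 2 + (inner ℝ (p₁ - p₂) v : ℝ) := by
          rw [hc]; field_simp; ring
        calc |t - c| * s ^ 2 = |(t - c) * s ^ 2| := by
              rw [abs_mul, abs_of_nonneg (by positivity : (0:ℝ) ≤ s ^ 2)]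
          _ ≤ 2 * (r * s) := by rw [h1]; exact hkey
      rw [hL, le_div_iff₀ hspos]
      nlinarith [habs, hspos, abs_nonneg (t - c)]
    intro i _
    simp only [hI]
    by_cases hi : i = 0
    · subst hi
      simp only [if_pos rfl, Set.mem_Icc]
      have : b.repr (x - p₁) 0 = t := by
        rw [b.repr_apply_apply, hb0, real_inner_comm]
      rw [this]
      rw [abs_le] at htbound
      constructor <;> linarith [htbound.1, htbound.2]
    · simp only [if_neg hi, Set.mem_Icc]
      have hbiu : (inner ℝ (b i) u₁ : ℝ) = 0 := by
        rw [← hb0]; exact b.orthonormal.2 hi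
      have : b.repr (x - p₁) i = (inner ℝ (b i) w : ℝ) := by
        rw [b.repr_apply_apply]
        have : x - p₁ = w + t • u₁ := by rw [hw]; abel
        rw [this, inner_add_right, real_inner_smul_right, hbiu]; ring
      rw [this]
      have : |(inner ℝ (b i) w : ℝ)| ≤ r := by
        calc |(inner ℝ (b i) w : ℝ)| ≤ ‖b i‖ * ‖w‖ := abs_real_inner_le_norm _ _
          _ ≤ r := by rw [b.orthonormal.1 i, one_mul]; exact hwle
      rw [abs_le] at this
      exact ⟨this.1, this.2⟩
  -- measure computation
  have hmp : MeasurePreserving (fun x : E3 => b.repr (x - p₁)) volume volume := by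
    have h1 : MeasurePreserving (fun x : E3 => x + -p₁) volume volume :=
      measurePreserving_add_right volume (-p₁)
    have h2 := b.measurePreserving_repr.comp h1
    have heq : (fun x : E3 => b.repr (x - p₁)) = ⇑b.repr ∘ fun x => x + -p₁ := by
      funext x; simp only [Function.comp_apply, sub_eq_add_neg]
    rw [heq]; exact h2
  have hIeq : ∀ i, I i = Set.Icc (if i = 0 then c - L else -r) (if i = 0 then c + L else r) := by
    intro i; rw [hI]; dsimp only; split_ifs <;> rfl
  have hboxmeas : MeasurableSet box := by
    rw [hbox]
    refine MeasurableSet.preimage ?_ (WithLp.measurable_ofLp 2 _)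
    exact MeasurableSet.univ_pi fun i => by rw [hIeq i]; exact measurableSet_Icc
  have hvolbox : volume box = ENNReal.ofReal (2 * L) * (ENNReal.ofReal (2 * r) *
      ENNReal.ofReal (2 * r)) := by
    have hmp2 := (PiLp.volume_preserving_ofLp (Fin 3)).measure_preimage
      (MeasurableSet.univ_pi (fun i : Fin 3 => measurableSet_Icc (α := ℝ)
        (a := if i = 0 then c - L else -r) (b := if i = 0 then c + L else r))).nullMeasurableSet
    have hpre : (@WithLp.ofLp 2 (Fin 3 → ℝ)) ⁻¹'
        (Set.pi Set.univ fun i => Set.Icc (if i = 0 then c - L else -r)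
          (if i = 0 then c + L else r)) = box := by
      rw [hbox]
      ext x
      simp only [Set.mem_preimage, Set.mem_univ_pi]
      constructor
      · intro h
        refine fun i => ?_
        rw [hIeq i]; exact h i
      · intro h i
        rw [← hIeq i]; exact h i
    rw [hpre] at hmp2
    rw [hmp2, volume_pi_pi, Fin.prod_univ_three]
    have e0 : c + L - (c - L) = 2 * L := by ring
    have e1 : r - -r = 2 * r := by ring
    norm_num [Real.volume_Icc, e0, e1, show (1 : Fin 3) ≠ 0 by decide,
      show (2 : Fin 3) ≠ 0 by decide]
    rw [mul_assoc]
  calc volume (solidCylinder p₁ u₁ r ∩ solidCylinder p₂ u₂ r)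
      ≤ volume ((fun x => b.repr (x - p₁)) ⁻¹' box) := measure_mono hincl
    _ = volume box := hmp.measure_preimage hboxmeas.nullMeasurableSet
    _ = ENNReal.ofReal (2 * L) * (ENNReal.ofReal (2 * r) * ENNReal.ofReal (2 * r)) := hvolbox
    _ = ENNReal.ofReal (16 * r ^ 3 / s) := by
        rw [← ENNReal.ofReal_mul (by positivity), ← ENNReal.ofReal_mul (by positivity)]
        congr 1
        rw [hL]; field_simp; ring
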